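/- Let x = X_1 be the generating operator of the complex group algebra of the free group F_N on N ≥ 1 generators, and let τ be the canonical trace (coefficient at the identity). For all n ≥ 1 and all k' ≥ 0, τ(x^{n+k'} · X_n) = Σ_{i=0}^{n−1} binom(n,i)·(2N−1)^i · τ(x^{k'} · X_{2n−2i}) + 2N·(2N−1)^{n−1} · τ(x^{k'}). -/

import Mathlib

open FreeGroup MonoidAlgebra

variable {N : ℕ}

/-- `Xop N n` is the operator `X_n`: the sum, in the complex group algebra
`ℂ[F_N] = MonoidAlgebra ℂ (FreeGroup (Fin N))`, of the basis elements of all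
words `w` whose reduced word has length `n`. Note `Xop N 0 = 1`. -/
noncomputable def Xop (N n : ℕ) : MonoidAlgebra ℂ (FreeGroup (Fin N)) :=
  ∑ᶠ w ∈ {w : FreeGroup (Fin N) | (FreeGroup.toWord w).length = n},
    MonoidAlgebra.of ℂ (FreeGroup (Fin N)) w

/-- The canonical trace `τ` on `ℂ[F_N]`: the coefficient at the identity. -/
noncomputable def tr {N : ℕ} (a : MonoidAlgebra ℂ (FreeGroup (Fin N))) : ℂ := a.coeff 1

lemma Sfin (N n : ℕ) : {w : FreeGroup (Fin N) | (FreeGroup.toWord w).length = n}.Finite := by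
  have : {w : FreeGroup (Fin N) | (FreeGroup.toWord w).length = n}
      = FreeGroup.toWord ⁻¹' {l | l.length = n} := rfl
  rw [this]
  exact (List.finite_length_eq _ n).preimage FreeGroup.toWord_injective.injOn

lemma Xop_eq (N n : ℕ) : Xop N n = ∑ w ∈ (Sfin N n).toFinset,
    MonoidAlgebra.of ℂ (FreeGroup (Fin N)) w := by
  rw [Xop, ← finsum_mem_coe_finset, Set.Finite.coe_toFinset]

lemma Xop_apply (N n : ℕ) (w : FreeGroup (Fin N)) :
    (Xop N n).coeff w = if (FreeGroup.toWord w).length = n then 1 else 0 := by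
  rw [Xop_eq]
  rw [MonoidAlgebra.coeff_sum, Finset.sum_apply']
  simp only [MonoidAlgebra.of_apply, MonoidAlgebra.coeff_single, Finsupp.single_apply]
  rw [Finset.sum_ite_eq' ((Sfin N n).toFinset) w (fun _ => (1:ℂ))]
  simp [Set.Finite.mem_toFinset]

lemma toWord_mk_single (x : Fin N × Bool) : (FreeGroup.mk [x]).toWord = [x] := by
  rw [FreeGroup.toWord_mk, FreeGroup.reduce_singleton]

lemma Xop_one_eq : Xop N 1 = ∑ x : Fin N × Bool,
    MonoidAlgebra.single (FreeGroup.mk [x]) (1:ℂ) := by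
  rw [Xop_eq]
  have hs : (Sfin N 1).toFinset =
      Finset.univ.image (fun x : Fin N × Bool => FreeGroup.mk [x]) := by
    ext w
    simp only [Set.Finite.mem_toFinset, Set.mem_setOf_eq, Finset.mem_image, Finset.mem_univ,
      true_and]
    constructor
    · intro h
      match hw : w.toWord, h with
      | [x], _ =>
        exact ⟨x, by rw [← FreeGroup.mk_toWord (x := w), hw]⟩
    · rintro ⟨x, rfl⟩
      rw [toWord_mk_single]; rfl
  rw [hs, Finset.sum_image (by
    intro a _ b _ h
    have := congrArg FreeGroup.toWord h
    rwa [toWord_mk_single, toWord_mk_single, List.cons.injEq, and_iff_left rfl] at this)]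
  rfl

lemma invRev_single (x : Fin N × Bool) :
    FreeGroup.invRev [x] = [(x.1, !x.2)] := rfl

lemma mul_Xop_apply (m : ℕ) (w : FreeGroup (Fin N)) :
    (Xop N 1 * Xop N m).coeff w =
      ∑ x : Fin N × Bool,
        (if (FreeGroup.reduce (x :: w.toWord)).length = m then (1:ℂ) else 0) := by
  rw [Xop_one_eq, Finset.sum_mul, MonoidAlgebra.coeff_sum, Finset.sum_apply']
  have key : ∀ x : Fin N × Bool,
      (MonoidAlgebra.single (FreeGroup.mk [x]) (1:ℂ) * Xop N m).coeff w
        = if (FreeGroup.reduce ((x.1, !x.2) :: w.toWord)).length = m then (1:ℂ) else 0 := by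
    intro x
    rw [MonoidAlgebra.coeff_single_mul_apply, one_mul]
    have h1 : (FreeGroup.mk [x])⁻¹ * w = FreeGroup.mk ((x.1, !x.2) :: w.toWord) := by
      rw [FreeGroup.inv_mk, invRev_single]
      conv_lhs => rw [← FreeGroup.mk_toWord (x := w)]
      rw [FreeGroup.mul_mk]
      rfl
    rw [h1, Xop_apply, FreeGroup.toWord_mk]
  simp only [key]
  exact Fintype.sum_equiv
    (Equiv.prodCongr (Equiv.refl _) (Equiv.mk Bool.not Bool.not Bool.not_not Bool.not_not)) _ _
    (fun x => rfl)

lemma reduce_cons_reduced {L : List (Fin N × Bool)} (hL : FreeGroup.reduce L = L)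
    (x : Fin N × Bool) :
    FreeGroup.reduce (x :: L) =
      List.casesOn L [x] fun hd tl =>
        if x.1 = hd.1 ∧ x.2 = !hd.2 then tl else x :: hd :: tl := by
  rw [FreeGroup.reduce.cons, hL]

lemma count_nil (m : ℕ) (w : FreeGroup (Fin N)) (hw : w.toWord = []) :
    ∑ x : Fin N × Bool,
        (if (FreeGroup.reduce (x :: w.toWord)).length = m then (1:ℂ) else 0)
      = if m = 1 then ((2*N : ℕ) : ℂ) else 0 := by
  have : ∀ x : Fin N × Bool,
      (if (FreeGroup.reduce (x :: w.toWord)).length = m then (1:ℂ) else 0)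
        = if 1 = m then (1:ℂ) else 0 := by
    intro x
    rw [hw, FreeGroup.reduce_singleton]; simp
  simp only [this]
  rw [Finset.sum_const]
  simp only [Finset.card_univ, Fintype.card_prod, Fintype.card_fin, Fintype.card_bool]
  split_ifs with h1 h2 h2 <;> first | omega | (simp; try ring)

lemma count_cons (hN : 1 ≤ N) (m : ℕ) (w : FreeGroup (Fin N)) (y : Fin N × Bool)
    (t : List (Fin N × Bool)) (hw : w.toWord = y :: t) :
    ∑ x : Fin N × Bool,
        (if (FreeGroup.reduce (x :: w.toWord)).length = m then (1:ℂ) else 0)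
      = (if t.length = m then (1:ℂ) else 0)
        + (if t.length + 2 = m then ((2*N - 1 : ℕ) : ℂ) else 0) := by
  have hred : FreeGroup.reduce (y :: t) = y :: t := by
    rw [← hw]; exact FreeGroup.reduce_toWord w
  set A : ℂ := if t.length = m then (1:ℂ) else 0 with hA
  set B : ℂ := if t.length + 2 = m then (1:ℂ) else 0 with hB
  have key : ∀ x : Fin N × Bool,
      (if (FreeGroup.reduce (x :: w.toWord)).length = m then (1:ℂ) else 0)
        = if x = (y.1, !y.2) then A else B := by
    intro x
    rw [hw, reduce_cons_reduced hred]
    simp only []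
    by_cases hx : x = (y.1, !y.2)
    · subst hx
      simp only [and_self, if_true, if_pos rfl, hA]
    · have hc : ¬(x.1 = y.1 ∧ x.2 = !y.2) := by
        intro h; exact hx (Prod.ext h.1 h.2)
      simp only [hc, if_false, if_neg hx, hB, List.length_cons]
  simp only [key]
  have split : ∀ x : Fin N × Bool,
      (if x = (y.1, !y.2) then A else B) = B + (if x = (y.1, !y.2) then A - B else 0) := by
    intro x; split_ifs <;> ring
  simp only [split]
  rw [Finset.sum_add_distrib, Finset.sum_const, Finset.sum_ite_eq' Finset.univ _
    (fun _ => A - B)]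
  simp only [Finset.mem_univ, if_pos, Finset.card_univ, Fintype.card_prod, Fintype.card_fin,
    Fintype.card_bool]
  have hcast : ((2*N - 1 : ℕ) : ℂ) = 2*N - 1 := by
    push_cast [Nat.cast_sub (by omega : 1 ≤ 2*N)]; ring
  have hB' : (if t.length + 2 = m then ((2*N - 1 : ℕ) : ℂ) else 0) = (2*N - 1 : ℂ) * B := by
    rw [hB, hcast]; split_ifs <;> ring
  rw [hB']
  have : (N * 2 : ℕ) • B = (2*N : ℂ) * B := by
    rw [nsmul_eq_mul]; push_cast; ring
  rw [this]; ring

lemma xmul (hN : 1 ≤ N) {m : ℕ} (hm : 2 ≤ m) :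
    Xop N 1 * Xop N m = Xop N (m+1) + ((2*N - 1 : ℕ) : ℂ) • Xop N (m-1) := by
  ext w
  rw [MonoidAlgebra.coeff_add, Finsupp.add_apply, MonoidAlgebra.coeff_smul_apply, mul_Xop_apply, Xop_apply, Xop_apply, smul_eq_mul]
  rcases hw : w.toWord with _ | ⟨y, t⟩
  · have hc := count_nil m w hw; rw [hw] at hc; rw [hc]
    have h1 : ¬ (m = 1) := by omega
    have h2 : ¬ ((0:ℕ) = m + 1) := by omega
    have h3 : ¬ ((0:ℕ) = m - 1) := by omega
    simp [hw, h1, h2, h3]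
  · have hc := count_cons hN m w y t hw; rw [hw] at hc; rw [hc]
    have e1 : (t.length = m) ↔ ((y :: t).length = m + 1) := by simp only [List.length_cons]; omega
    have e2 : (t.length + 2 = m) ↔ ((y :: t).length = m - 1) := by simp only [List.length_cons]; omega
    rw [if_congr e1 rfl rfl, if_congr e2 rfl rfl]
    split_ifs <;> ring

lemma xmul1 (hN : 1 ≤ N) :
    Xop N 1 * Xop N 1 = Xop N 2 + ((2*N : ℕ) : ℂ) • Xop N 0 := by
  ext w
  rw [MonoidAlgebra.coeff_add, Finsupp.add_apply, MonoidAlgebra.coeff_smul_apply, mul_Xop_apply, Xop_apply, Xop_apply, smul_eq_mul]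
  rcases hw : w.toWord with _ | ⟨y, t⟩
  · have hc := count_nil 1 w hw; rw [hw] at hc; rw [hc]
    simp [hw]
  · have hc := count_cons hN 1 w y t hw; rw [hw] at hc; rw [hc]
    have e1 : (t.length = 1) ↔ ((y :: t).length = 2) := by simp
    have e2 : ¬ (t.length + 2 = 1) := by omega
    have e3 : ¬ ((y :: t).length = 0) := by simp
    rw [if_congr e1 rfl rfl, if_neg e2, if_neg e3]
    ring

lemma Xop_zero : Xop N 0 = 1 := by
  ext w
  rw [Xop_apply]
  rw [MonoidAlgebra.one_def, MonoidAlgebra.coeff_single, Finsupp.single_apply]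
  have : (w.toWord.length = 0) ↔ (1 = w) := by
    rw [List.length_eq_zero_iff]
    constructor
    · intro h
      rw [← FreeGroup.mk_toWord (x := w), h]; rfl
    · rintro rfl
      rw [FreeGroup.toWord_one]
  rw [if_congr this rfl rfl]

lemma pascal_coeff (M j i : ℕ) :
    (((j.choose (i+1) * M^(i+1) : ℕ)) : ℂ) + (M : ℂ) * ((j.choose i * M^i : ℕ) : ℂ)
      = (((j+1).choose (i+1) * M^(i+1) : ℕ) : ℂ) := by
  have : (j+1).choose (i+1) * M^(i+1) = j.choose (i+1) * M^(i+1) + j.choose i * (M * M^i) := by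
    rw [Nat.choose_succ_succ', pow_succ']
    ring
  rw [this]
  push_cast
  ring

lemma pow_mul_Xop (hN : 1 ≤ N) (j : ℕ) : ∀ m : ℕ, j < m →
    (Xop N 1)^j * Xop N m
      = ∑ i ∈ Finset.range (j+1),
          ((j.choose i * (2*N-1)^i : ℕ) : ℂ) • Xop N (m + j - 2*i) := by
  induction j with
  | zero => intro m _; simp
  | succ j ih =>
    intro m hm
    have hjm : j < m := by omega
    rw [pow_succ', mul_assoc, ih m hjm, Finset.mul_sum]
    have step : ∀ i ∈ Finset.range (j+1),
        Xop N 1 * (((j.choose i * (2*N-1)^i : ℕ) : ℂ) • Xop N (m + j - 2*i))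
          = ((j.choose i * (2*N-1)^i : ℕ) : ℂ) • Xop N (m + (j+1) - 2*i)
            + (((2*N-1:ℕ) : ℂ) * ((j.choose i * (2*N-1)^i : ℕ) : ℂ))
              • Xop N (m + (j+1) - 2*(i+1)) := by
      intro i hi
      rw [Finset.mem_range] at hi
      have h2 : 2 ≤ m + j - 2*i := by omega
      rw [mul_smul_comm, xmul hN h2]
      have e1 : m + j - 2*i + 1 = m + (j+1) - 2*i := by omega
      have e2 : m + j - 2*i - 1 = m + (j+1) - 2*(i+1) := by omega
      rw [e1, e2, smul_add, smul_smul,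
        mul_comm ((j.choose i * (2*N-1)^i : ℕ) : ℂ) ((2*N-1:ℕ) : ℂ)]
    rw [Finset.sum_congr rfl step, Finset.sum_add_distrib]
    -- extend first sum to range (j+2) since coefficient at i = j+1 is zero
    have hz : ((j.choose (j+1) * (2*N-1)^(j+1) : ℕ) : ℂ) • Xop N (m + (j+1) - 2*(j+1)) = 0 := by
      rw [Nat.choose_succ_self, zero_mul, Nat.cast_zero, zero_smul]
    have first : ∑ i ∈ Finset.range (j+1),
        ((j.choose i * (2*N-1)^i : ℕ) : ℂ) • Xop N (m + (j+1) - 2*i)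
        = ∑ i ∈ Finset.range (j+2),
        ((j.choose i * (2*N-1)^i : ℕ) : ℂ) • Xop N (m + (j+1) - 2*i) := by
      rw [Finset.sum_range_succ (n := j+1), hz, add_zero]
    rw [first, Finset.sum_range_succ' (n := j+1),
      Finset.sum_range_succ' (f := fun i => (((j+1).choose i * (2*N-1)^i : ℕ) : ℂ)
        • Xop N (m + (j+1) - 2*i)) (n := j+1)]
    have merge : (∑ k ∈ Finset.range (j+1),
          ((j.choose (k+1) * (2*N-1)^(k+1) : ℕ) : ℂ) • Xop N (m + (j+1) - 2*(k+1)))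
        + ∑ k ∈ Finset.range (j+1),
          (((2*N-1:ℕ) : ℂ) * ((j.choose k * (2*N-1)^k : ℕ) : ℂ)) • Xop N (m + (j+1) - 2*(k+1))
        = ∑ k ∈ Finset.range (j+1),
          (((j+1).choose (k+1) * (2*N-1)^(k+1) : ℕ) : ℂ) • Xop N (m + (j+1) - 2*(k+1)) := by
      rw [← Finset.sum_add_distrib]
      apply Finset.sum_congr rfl
      intro i _
      rw [← add_smul, pascal_coeff]
    rw [add_right_comm, merge]
    congr 1
    norm_num

lemma main_id (hN : 1 ≤ N) (p : ℕ) :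
    (Xop N 1)^(p+1) * Xop N (p+1)
      = ∑ i ∈ Finset.range (p+1),
          (((p+1).choose i * (2*N-1)^i : ℕ) : ℂ) • Xop N (2*(p+1) - 2*i)
        + ((2*N*(2*N-1)^p : ℕ) : ℂ) • 1 := by
  rw [pow_succ', mul_assoc, pow_mul_Xop hN p (p+1) (Nat.lt_succ_self p), Finset.mul_sum]
  have hterm : ∀ i ∈ Finset.range p,
      Xop N 1 * (((p.choose i * (2*N-1)^i : ℕ) : ℂ) • Xop N (p+1+p-2*i))
        = ((p.choose i * (2*N-1)^i : ℕ) : ℂ) • Xop N (2*(p+1)-2*i)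
          + (((2*N-1:ℕ):ℂ) * ((p.choose i * (2*N-1)^i : ℕ) : ℂ)) • Xop N (2*(p+1)-2*(i+1)) := by
    intro i hi
    rw [Finset.mem_range] at hi
    have h2 : 2 ≤ p+1+p-2*i := by omega
    rw [mul_smul_comm, xmul hN h2, smul_add, smul_smul,
      mul_comm ((p.choose i * (2*N-1)^i : ℕ) : ℂ) ((2*N-1:ℕ) : ℂ)]
    have e1 : p+1+p-2*i+1 = 2*(p+1)-2*i := by omega
    have e2 : p+1+p-2*i-1 = 2*(p+1)-2*(i+1) := by omega
    rw [e1, e2]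
  have hlast : Xop N 1 * (((p.choose p * (2*N-1)^p : ℕ) : ℂ) • Xop N (p+1+p-2*p))
      = ((p.choose p * (2*N-1)^p : ℕ) : ℂ) • Xop N (2*(p+1)-2*p)
        + ((2*N*(2*N-1)^p : ℕ) : ℂ) • 1 := by
    have e0 : p+1+p-2*p = 1 := by omega
    have e2 : Xop N 2 = Xop N (2*(p+1)-2*p) := by
      congr 1; omega
    rw [e0, mul_smul_comm, xmul1 hN, Xop_zero, smul_add, smul_smul, e2]
    congr 1
    have hc : ((p.choose p * (2*N-1)^p : ℕ) : ℂ) * ((2*N : ℕ) : ℂ) = ((2*N*(2*N-1)^p : ℕ) : ℂ) := by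
      push_cast [Nat.choose_self]
      ring
    rw [hc]
  rw [Finset.sum_range_succ, Finset.sum_congr rfl hterm, hlast]
  have key : (∑ i ∈ Finset.range p,
        (((p.choose i * (2*N-1)^i : ℕ) : ℂ) • Xop N (2*(p+1)-2*i)
          + (((2*N-1:ℕ):ℂ) * ((p.choose i * (2*N-1)^i : ℕ) : ℂ)) • Xop N (2*(p+1)-2*(i+1))))
      + ((p.choose p * (2*N-1)^p : ℕ) : ℂ) • Xop N (2*(p+1)-2*p)
      = ∑ i ∈ Finset.range (p+1),
          (((p+1).choose i * (2*N-1)^i : ℕ) : ℂ) • Xop N (2*(p+1) - 2*i) := by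
    rw [Finset.sum_add_distrib, add_right_comm, ← Finset.sum_range_succ
      (f := fun i => ((p.choose i * (2*N-1)^i : ℕ) : ℂ) • Xop N (2*(p+1)-2*i)),
      Finset.sum_range_succ'
        (f := fun i => ((p.choose i * (2*N-1)^i : ℕ) : ℂ) • Xop N (2*(p+1)-2*i)),
      Finset.sum_range_succ'
        (f := fun i => (((p+1).choose i * (2*N-1)^i : ℕ) : ℂ) • Xop N (2*(p+1)-2*i)),
      add_right_comm, ← Finset.sum_add_distrib]
    congr 1
    · apply Finset.sum_congr rfl
      intro i _
      rw [← add_smul, pascal_coeff]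
    · norm_num
  rw [← key]
  abel

theorem stmt_9 (N : ℕ) (hN : 1 ≤ N) (n k' : ℕ) (hn : 1 ≤ n) :
    tr ((Xop N 1) ^ (n + k') * Xop N n) =
      (∑ i ∈ Finset.range n,
        (n.choose i * (2 * N - 1) ^ i : ℕ) * tr ((Xop N 1) ^ k' * Xop N (2 * n - 2 * i)))
      + (2 * N * (2 * N - 1) ^ (n - 1) : ℕ) * tr ((Xop N 1) ^ k') := by
  obtain ⟨p, rfl⟩ : ∃ p, n = p + 1 := ⟨n - 1, by omega⟩
  have hx : (Xop N 1)^(p+1+k') * Xop N (p+1)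
      = (Xop N 1)^k' * ((Xop N 1)^(p+1) * Xop N (p+1)) := by
    rw [← mul_assoc, ← pow_add, add_comm k' (p+1)]
  rw [hx, main_id hN p, mul_add, Finset.mul_sum]
  unfold tr
  rw [MonoidAlgebra.coeff_add, Finsupp.add_apply, MonoidAlgebra.coeff_sum, Finset.sum_apply']
  congr 1
  · apply Finset.sum_congr rfl
    intro i _
    rw [mul_smul_comm, MonoidAlgebra.coeff_smul_apply, smul_eq_mul]
  · rw [mul_smul_comm, mul_one, MonoidAlgebra.coeff_smul_apply, smul_eq_mul]
    norm_num
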